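/- Let Π_A ∈ GL_{2g}(ℂ) and Π_{A*} := (2iπ·Π_A^{-1})ᵗ. Let L_P ∈ Mat_{n,2g}(ℂ), L_Q ∈ Mat_{s,2g}(ℂ), and define Υ_Q := −Π_A·L_Qᵗ, Υ_P := −Π_{A*}·L_Pᵗ, and let Ξ_R ∈ Mat_{n,s}(ℂ), Ξ_{R*} ∈ Mat_{s,n}(ℂ) satisfy Ξ_Rᵗ + Ξ_{R*} = −L_Q·L_Pᵗ. Set Π_M = [[Ξ_R, L_P, Id_n],[Υ_Q, Π_A, 0],[2iπ·Id_s, 0, 0]] and Π_{M*} = [[0, 0, 2iπ·Id_n],[0, Π_{A*}, Υ_P],[Id_s, L_Q, Ξ_{R*}]]. Then Π_{M*} = (2iπ·Π_M^{-1})ᵗ. In particular det(Π_M)·det(Π_{M*}) = (2iπ)^{n+2g+s}. -/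

import Mathlib

open Matrix

lemma fromColumns_add' {m n₁ n₂ : Type*} (A C : Matrix m n₁ ℂ) (B D : Matrix m n₂ ℂ) :
    fromCols A B + fromCols C D = fromCols (A + C) (B + D) := by
  ext i (j | j) <;> simp

lemma fromRows_add' {m₁ m₂ n : Type*} (A C : Matrix m₁ n ℂ) (B D : Matrix m₂ n ℂ) :
    fromRows A B + fromRows C D = fromRows (A + C) (B + D) := by
  ext (i | i) j <;> simp

/-- doc preserved below -/
theorem period_matrix_cartier_duality (n g s : ℕ)
    (PA : Matrix (Fin (2 * g)) (Fin (2 * g)) ℂ) (hPA : IsUnit PA.det)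
    (PAs : Matrix (Fin (2 * g)) (Fin (2 * g)) ℂ)
    (hPAs : PAs = ((2 * (Real.pi : ℂ) * Complex.I) • PA⁻¹)ᵀ)
    (LP : Matrix (Fin n) (Fin (2 * g)) ℂ) (LQ : Matrix (Fin s) (Fin (2 * g)) ℂ)
    (UQ : Matrix (Fin (2 * g)) (Fin s) ℂ) (hUQ : UQ = -(PA * LQᵀ))
    (UP : Matrix (Fin (2 * g)) (Fin n) ℂ) (hUP : UP = -(PAs * LPᵀ))
    (XiR : Matrix (Fin n) (Fin s) ℂ) (XiRs : Matrix (Fin s) (Fin n) ℂ)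
    (hXi : XiRᵀ + XiRs = -(LQ * LPᵀ)) :
    (fromBlocks XiR (fromCols LP (1 : Matrix (Fin n) (Fin n) ℂ))
        (fromRows UQ ((2 * (Real.pi : ℂ) * Complex.I) • (1 : Matrix (Fin s) (Fin s) ℂ)))
        (fromBlocks PA 0 0 0)) *
      (fromBlocks (0 : Matrix (Fin n) (Fin s) ℂ)
        (fromCols (0 : Matrix (Fin n) (Fin (2 * g)) ℂ)
          ((2 * (Real.pi : ℂ) * Complex.I) • (1 : Matrix (Fin n) (Fin n) ℂ)))
        (fromRows (0 : Matrix (Fin (2 * g)) (Fin s) ℂ) (1 : Matrix (Fin s) (Fin s) ℂ))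
        (fromBlocks PAs UP LQ XiRs))ᵀ
      = (2 * (Real.pi : ℂ) * Complex.I) •
        (1 : Matrix (Fin n ⊕ (Fin (2 * g) ⊕ Fin s)) (Fin n ⊕ (Fin (2 * g) ⊕ Fin s)) ℂ) ∧
    (fromBlocks (0 : Matrix (Fin n) (Fin s) ℂ)
        (fromCols (0 : Matrix (Fin n) (Fin (2 * g)) ℂ)
          ((2 * (Real.pi : ℂ) * Complex.I) • (1 : Matrix (Fin n) (Fin n) ℂ)))
        (fromRows (0 : Matrix (Fin (2 * g)) (Fin s) ℂ) (1 : Matrix (Fin s) (Fin s) ℂ))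
        (fromBlocks PAs UP LQ XiRs))ᵀ *
      (fromBlocks XiR (fromCols LP (1 : Matrix (Fin n) (Fin n) ℂ))
        (fromRows UQ ((2 * (Real.pi : ℂ) * Complex.I) • (1 : Matrix (Fin s) (Fin s) ℂ)))
        (fromBlocks PA 0 0 0))
      = (2 * (Real.pi : ℂ) * Complex.I) •
        (1 : Matrix (Fin s ⊕ (Fin (2 * g) ⊕ Fin n)) (Fin s ⊕ (Fin (2 * g) ⊕ Fin n)) ℂ) ∧
    ∀ e : (Fin n ⊕ (Fin (2 * g) ⊕ Fin s)) ≃ (Fin s ⊕ (Fin (2 * g) ⊕ Fin n)),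
      ((fromBlocks XiR (fromCols LP (1 : Matrix (Fin n) (Fin n) ℂ))
        (fromRows UQ ((2 * (Real.pi : ℂ) * Complex.I) • (1 : Matrix (Fin s) (Fin s) ℂ)))
        (fromBlocks PA 0 0 0)).submatrix id e).det *
      ((fromBlocks (0 : Matrix (Fin n) (Fin s) ℂ)
        (fromCols (0 : Matrix (Fin n) (Fin (2 * g)) ℂ)
          ((2 * (Real.pi : ℂ) * Complex.I) • (1 : Matrix (Fin n) (Fin n) ℂ)))
        (fromRows (0 : Matrix (Fin (2 * g)) (Fin s) ℂ) (1 : Matrix (Fin s) (Fin s) ℂ))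
        (fromBlocks PAs UP LQ XiRs)).submatrix id e).det
      = (2 * (Real.pi : ℂ) * Complex.I) ^ (n + 2 * g + s) := by
  set c : ℂ := 2 * (Real.pi : ℂ) * Complex.I with hc
  have hc0 : c ≠ 0 := by
    rw [hc]
    exact mul_ne_zero (mul_ne_zero two_ne_zero
      (Complex.ofReal_ne_zero.2 Real.pi_ne_zero)) Complex.I_ne_zero
  have hPAmul : PA * PAsᵀ = c • 1 := by
    rw [hPAs, transpose_transpose, Matrix.mul_smul, Matrix.mul_nonsing_inv _ hPA]
  have hPAmul' : PAsᵀ * PA = c • 1 := by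
    rw [hPAs, transpose_transpose, Matrix.smul_mul, Matrix.nonsing_inv_mul _ hPA]
  have hXiT : XiR + XiRsᵀ = -(LP * LQᵀ) := by
    have := congrArg Matrix.transpose hXi
    simpa [Matrix.transpose_add, Matrix.transpose_neg, Matrix.transpose_mul,
      add_comm] using this
  have h1 : LP * PAsᵀ + UPᵀ = 0 := by
    rw [hUP, Matrix.transpose_neg, Matrix.transpose_mul, Matrix.transpose_transpose]
    simp
  have h2 : XiR + (LP * LQᵀ + XiRsᵀ) = 0 := by
    linear_combination (norm := abel) hXiT
  have key1 : (fromBlocks XiR (fromCols LP (1 : Matrix (Fin n) (Fin n) ℂ))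
        (fromRows UQ (c • (1 : Matrix (Fin s) (Fin s) ℂ)))
        (fromBlocks PA 0 0 0)) *
      (fromBlocks (0 : Matrix (Fin n) (Fin s) ℂ)
        (fromCols (0 : Matrix (Fin n) (Fin (2 * g)) ℂ)
          (c • (1 : Matrix (Fin n) (Fin n) ℂ)))
        (fromRows (0 : Matrix (Fin (2 * g)) (Fin s) ℂ) (1 : Matrix (Fin s) (Fin s) ℂ))
        (fromBlocks PAs UP LQ XiRs))ᵀ
      = c • (1 : Matrix (Fin n ⊕ (Fin (2 * g) ⊕ Fin s))
          (Fin n ⊕ (Fin (2 * g) ⊕ Fin s)) ℂ) := by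
    simp only [fromBlocks_transpose, transpose_fromCols, transpose_fromRows,
      transpose_smul, transpose_zero, transpose_one, fromBlocks_multiply,
      fromCols_mul_fromRows, fromRows_mul_fromCols, fromCols_mul_fromBlocks,
      fromBlocks_mul_fromRows, Matrix.mul_fromCols, Matrix.mul_zero, Matrix.zero_mul,
      Matrix.mul_one, Matrix.one_mul, add_zero, zero_add, Matrix.smul_mul,
      Matrix.mul_smul, hPAmul]
    rw [fromColumns_add', zero_add, h1, h2, fromCols_zero, hUQ]
    have hBR : fromCols (0 : Matrix (Fin (2*g) ⊕ Fin s) (Fin (2*g)) ℂ)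
          ((-(PA * LQᵀ)).fromRows (c • 1)) +
          fromBlocks (c • (1 : Matrix (Fin (2*g)) (Fin (2*g)) ℂ)) (PA * LQᵀ)
            (0 : Matrix (Fin s) (Fin (2*g)) ℂ) 0 = c • 1 := by
      rw [← fromRows_zero, fromCols_fromRows_eq_fromBlocks, fromBlocks_add]
      simp [← fromBlocks_one, fromBlocks_smul]
    rw [hBR]
    simp [← fromBlocks_one, fromBlocks_smul, fromRows_zero]
  have e0 : (Fin n ⊕ (Fin (2 * g) ⊕ Fin s)) ≃ (Fin s ⊕ (Fin (2 * g) ⊕ Fin n)) :=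
    Fintype.equivOfCardEq (by simp [Fintype.card_sum]; omega)
  have key2 : (fromBlocks (0 : Matrix (Fin n) (Fin s) ℂ)
        (fromCols (0 : Matrix (Fin n) (Fin (2 * g)) ℂ)
          (c • (1 : Matrix (Fin n) (Fin n) ℂ)))
        (fromRows (0 : Matrix (Fin (2 * g)) (Fin s) ℂ) (1 : Matrix (Fin s) (Fin s) ℂ))
        (fromBlocks PAs UP LQ XiRs))ᵀ *
      (fromBlocks XiR (fromCols LP (1 : Matrix (Fin n) (Fin n) ℂ))
        (fromRows UQ (c • (1 : Matrix (Fin s) (Fin s) ℂ)))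
        (fromBlocks PA 0 0 0))
      = c • (1 : Matrix (Fin s ⊕ (Fin (2 * g) ⊕ Fin n))
          (Fin s ⊕ (Fin (2 * g) ⊕ Fin n)) ℂ) := by
    have h1' : (fromBlocks XiR (fromCols LP (1 : Matrix (Fin n) (Fin n) ℂ))
        (fromRows UQ (c • (1 : Matrix (Fin s) (Fin s) ℂ)))
        (fromBlocks PA 0 0 0)) *
        (c⁻¹ • (fromBlocks (0 : Matrix (Fin n) (Fin s) ℂ)
        (fromCols (0 : Matrix (Fin n) (Fin (2 * g)) ℂ)
          (c • (1 : Matrix (Fin n) (Fin n) ℂ)))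
        (fromRows (0 : Matrix (Fin (2 * g)) (Fin s) ℂ) (1 : Matrix (Fin s) (Fin s) ℂ))
        (fromBlocks PAs UP LQ XiRs))ᵀ) = 1 := by
      rw [Matrix.mul_smul, key1, smul_smul, inv_mul_cancel₀ hc0, one_smul]
    have h2' := (Matrix.mul_eq_one_comm_of_equiv e0).mp h1'
    rw [Matrix.smul_mul] at h2'
    have h3' := congrArg (fun M => c • M) h2'
    simpa [smul_smul, mul_inv_cancel₀ hc0] using h3'
  refine ⟨key1, key2, fun e => ?_⟩
  rw [← Matrix.det_transpose ((fromBlocks (0 : Matrix (Fin n) (Fin s) ℂ)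
        (fromCols (0 : Matrix (Fin n) (Fin (2 * g)) ℂ)
          (c • (1 : Matrix (Fin n) (Fin n) ℂ)))
        (fromRows (0 : Matrix (Fin (2 * g)) (Fin s) ℂ) (1 : Matrix (Fin s) (Fin s) ℂ))
        (fromBlocks PAs UP LQ XiRs)).submatrix id e), Matrix.transpose_submatrix,
    ← Matrix.det_mul, Matrix.submatrix_mul_equiv, key1, Matrix.submatrix_id_id,
    Matrix.det_smul, Matrix.det_one, mul_one]
  congr 1
  simp [Fintype.card_sum]
  omega
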